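/- Let m ≥ 3 be an integer. Let 𝕋² be the flat torus ℝ²/ℤ² with its quotient Euclidean metric, and let p₁, …, p_m be independent random points, each uniformly distributed on 𝕋². Let X be the distance from p₁ to the second closest point to it among p₂, …, p_m, and for each integer i ≥ 1 set rᵢ = √(1/(i·(m−1)·π)). Then for every integer i ≥ 4, the probability that X ∈ [r_{i+1}, r_i] is at most 1/i². -/

import Mathlib

open MeasureTheory ProbabilityTheory
open scoped ENNReal NNReal

noncomputable section

/-- The flat torus `ℝ²/ℤ²`, realized as the `ℓ²`-product of two copies of the
circle `ℝ/ℤ`; its metric is the quotient Euclidean metric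
`d([x],[y]) = min_{v ∈ ℤ²} ‖x − y − v‖`. -/
abbrev Torus : Type := WithLp 2 (AddCircle (1 : ℝ) × AddCircle (1 : ℝ))

instance : MeasurableSpace Torus := borel Torus
instance : BorelSpace Torus := ⟨rfl⟩

/-- The unit square `[0,1]² ⊆ ℝ²`. -/
def unitSquare : Set (EuclideanSpace ℝ (Fin 2)) := {x | ∀ i, x i ∈ Set.Icc (0 : ℝ) 1}

/-- The quotient projection `ℝ² → ℝ²/ℤ²`. -/
def proj (x : EuclideanSpace ℝ (Fin 2)) : Torus :=
  (WithLp.equiv 2 (AddCircle (1 : ℝ) × AddCircle (1 : ℝ))).symm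
    ((x 0 : AddCircle (1 : ℝ)), (x 1 : AddCircle (1 : ℝ)))

/-- The uniform (normalized Haar/Lebesgue) probability measure on the flat torus,
obtained by pushing forward the uniform measure on the unit square. -/
def torusUniform : Measure Torus := Measure.map proj (volume.restrict unitSquare)

/-- The distance from `x` to its second nearest point among the family `q`:
the second smallest value of a family is the minimum over all pairs of distinct
indices of the pairwise maxima. -/
def secondNearestDist {ι : Type*} (x : Torus) (q : ι → Torus) : ℝ :=
  sInf {t | ∃ j k : ι, j ≠ k ∧ t = max (dist x (q j)) (dist x (q k))}

/- ## Auxiliary material -/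

instance : Fact ((0 : ℝ) < 1) := ⟨one_pos⟩

instance : SecondCountableTopology Torus :=
  inferInstance

lemma continuous_proj : Continuous proj := by
  apply (WithLp.prod_continuous_toLp _ _ _).comp
  exact (((AddCircle.continuous_mk' 1).comp (PiLp.continuous_apply 2 _ (0 : Fin 2))).prodMk
    ((AddCircle.continuous_mk' 1).comp (PiLp.continuous_apply 2 _ (1 : Fin 2))))

lemma measurable_addCircle_mk : Measurable (fun a : ℝ => (a : AddCircle (1 : ℝ))) :=
  (AddCircle.continuous_mk' 1).measurable

/-- The measure of the preimage in `[0,1]` of a closed ball in the circle. -/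
lemma slice_bound (c : AddCircle (1 : ℝ)) (r : ℝ) :
    volume ({a : ℝ | (a : AddCircle (1 : ℝ)) ∈ Metric.closedBall c r} ∩ Set.Icc 0 1)
      ≤ ENNReal.ofReal (2 * r) := by
  set X : Set ℝ := {a : ℝ | (a : AddCircle (1 : ℝ)) ∈ Metric.closedBall c r}
  have hXmeas : MeasurableSet X := measurable_addCircle_mk measurableSet_closedBall
  have hsub : X ∩ Set.Icc 0 1 ⊆ (X ∩ Set.Ioc 0 1) ∪ {0} := by
    rintro a ⟨ha, h0, h1⟩
    rcases eq_or_lt_of_le h0 with h | h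
    · exact Or.inr (by simp [← h])
    · exact Or.inl ⟨ha, h, h1⟩
  calc volume (X ∩ Set.Icc 0 1) ≤ volume ((X ∩ Set.Ioc 0 1) ∪ {0}) := measure_mono hsub
    _ ≤ volume (X ∩ Set.Ioc 0 1) + volume ({0} : Set ℝ) := measure_union_le _ _
    _ = volume (X ∩ Set.Ioc 0 1) := by simp
    _ = (volume.restrict (Set.Ioc (0:ℝ) (0 + 1))) X := by
        rw [Measure.restrict_apply hXmeas, zero_add]
    _ = volume (Metric.closedBall c r) :=
        (AddCircle.measurePreserving_mk 1 0).measure_preimage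
          measurableSet_closedBall.nullMeasurableSet
    _ = ENNReal.ofReal (min 1 (2 * r)) := AddCircle.volume_closedBall 1 r
    _ ≤ ENNReal.ofReal (2 * r) := ENNReal.ofReal_le_ofReal (min_le_right _ _)

/-- Upper bound for the measure of a closed ball on the torus. -/
lemma torus_ball_bound (x : Torus) (r : ℝ) :
    torusUniform (Metric.closedBall x r)
      ≤ ENNReal.ofReal (2 * r) * ENNReal.ofReal (2 * r) := by
  set B1 : Set (AddCircle (1 : ℝ)) := Metric.closedBall x.fst r
  set B2 : Set (AddCircle (1 : ℝ)) := Metric.closedBall x.snd r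
  have hc1 : Continuous (fun y : Torus => y.fst) :=
    continuous_fst.comp (WithLp.prod_continuous_ofLp _ _ _)
  have hc2 : Continuous (fun y : Torus => y.snd) :=
    continuous_snd.comp (WithLp.prod_continuous_ofLp _ _ _)
  have hTmeas : MeasurableSet {y : Torus | y.fst ∈ B1 ∧ y.snd ∈ B2} :=
    (hc1.measurable measurableSet_closedBall).inter
      (hc2.measurable measurableSet_closedBall)
  have hsub : Metric.closedBall x r ⊆ {y : Torus | y.fst ∈ B1 ∧ y.snd ∈ B2} := by
    intro y hy
    rw [Metric.mem_closedBall, WithLp.prod_dist_eq_of_L2] at hy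
    have h1 : dist y.fst x.fst ≤ Real.sqrt (dist y.fst x.fst ^ 2 + dist y.snd x.snd ^ 2) :=
      calc dist y.fst x.fst = Real.sqrt (dist y.fst x.fst ^ 2) := (Real.sqrt_sq dist_nonneg).symm
        _ ≤ _ := Real.sqrt_le_sqrt (by nlinarith [sq_nonneg (dist y.snd x.snd)])
    have h2 : dist y.snd x.snd ≤ Real.sqrt (dist y.fst x.fst ^ 2 + dist y.snd x.snd ^ 2) :=
      calc dist y.snd x.snd = Real.sqrt (dist y.snd x.snd ^ 2) := (Real.sqrt_sq dist_nonneg).symm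
        _ ≤ _ := Real.sqrt_le_sqrt (by nlinarith [sq_nonneg (dist y.fst x.fst)])
    exact ⟨Metric.mem_closedBall.mpr (h1.trans hy), Metric.mem_closedBall.mpr (h2.trans hy)⟩
  set s : Fin 2 → Set ℝ :=
    ![{a : ℝ | (a : AddCircle (1 : ℝ)) ∈ B1} ∩ Set.Icc 0 1,
      {a : ℝ | (a : AddCircle (1 : ℝ)) ∈ B2} ∩ Set.Icc 0 1]
  have hsmeas : ∀ i, MeasurableSet (s i) := by
    intro i
    fin_cases i <;>
      exact (measurable_addCircle_mk measurableSet_closedBall).inter measurableSet_Icc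
  calc torusUniform (Metric.closedBall x r)
      ≤ torusUniform {y : Torus | y.fst ∈ B1 ∧ y.snd ∈ B2} := measure_mono hsub
    _ = (volume.restrict unitSquare) (proj ⁻¹' {y : Torus | y.fst ∈ B1 ∧ y.snd ∈ B2}) := by
        rw [torusUniform, Measure.map_apply continuous_proj.measurable hTmeas]
    _ = volume ((proj ⁻¹' {y : Torus | y.fst ∈ B1 ∧ y.snd ∈ B2}) ∩ unitSquare) := by
        rw [Measure.restrict_apply (continuous_proj.measurable hTmeas)]
    _ ≤ volume ((MeasurableEquiv.toLp 2 (Fin 2 → ℝ)).symm ⁻¹' (Set.univ.pi s)) := by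
        apply measure_mono
        rintro z ⟨⟨hz1, hz2⟩, hzsq⟩
        intro j _
        fin_cases j
        · exact ⟨hz1, hzsq 0⟩
        · exact ⟨hz2, hzsq 1⟩
    _ = volume (Set.univ.pi s) :=
        (EuclideanSpace.volume_preserving_symm_measurableEquiv_toLp (Fin 2)).measure_preimage
          (MeasurableSet.univ_pi hsmeas).nullMeasurableSet
    _ = ∏ i, volume (s i) := volume_pi_pi s
    _ = volume (s 0) * volume (s 1) := by rw [Fin.prod_univ_two]
    _ ≤ ENNReal.ofReal (2 * r) * ENNReal.ofReal (2 * r) := by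
        exact mul_le_mul' (slice_bound x.fst r) (slice_bound x.snd r)

/-- For `m ≥ 3` i.i.d. uniform points on the flat torus, let `X` be the distance
from `p₁` to its second nearest point among `p₂, …, p_m`, and let
`rᵢ = √(1/(i(m−1)π))`.  Then for every `i ≥ 4`, the probability that
`X ∈ [r_{i+1}, r_i]` is at most `1/i²`. -/
theorem second_nearest_distance_bound
    (m : ℕ) (hm : 3 ≤ m)
    (Ω : Type*) [MeasurableSpace Ω] (μ : Measure Ω) [IsProbabilityMeasure μ]
    (p : Fin m → Ω → Torus)
    (hmeas : ∀ i, Measurable (p i))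
    (hindep : iIndepFun p μ)
    (hlaw : ∀ i, Measure.map (p i) μ = torusUniform)
    (i : ℕ) (hi : 4 ≤ i) :
    μ {ω | secondNearestDist (p ⟨0, by omega⟩ ω)
            (fun j : {j : Fin m // j ≠ ⟨0, by omega⟩} => p j.1 ω) ∈
          Set.Icc (Real.sqrt (1 / ((i + 1) * (m - 1) * Real.pi)))
            (Real.sqrt (1 / (i * (m - 1) * Real.pi)))}
      ≤ ENNReal.ofReal (1 / i ^ 2) := by
  classical
  have hm0 : 0 < m := by omega
  set z : Fin m := ⟨0, by omega⟩ with hzdef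
  haveI hν : IsProbabilityMeasure torusUniform := by
    rw [← hlaw z]; exact Measure.isProbabilityMeasure_map (hmeas z).aemeasurable
  set r : ℝ := Real.sqrt (1 / (i * (m - 1) * Real.pi)) with hrdef
  have hr0 : 0 ≤ r := Real.sqrt_nonneg _
  set c : ℝ≥0∞ := ENNReal.ofReal (2 * r) with hcdef
  -- the bound for a fixed pair of indices
  have key : ∀ j k : Fin m, j ≠ z → k ≠ z → j ≠ k →
      μ {ω | dist (p z ω) (p j ω) ≤ r ∧ dist (p z ω) (p k ω) ≤ r}
        ≤ (c * c) * (c * c) := by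
    intro j k hj hk hjk
    have hpair : IndepFun (fun ω => (p j ω, p k ω)) (p z) μ :=
      hindep.indepFun_prodMk hmeas j k z hj hk
    have hjkI : IndepFun (p j) (p k) μ := hindep.indepFun hjk
    have hmapjk : μ.map (fun ω => (p j ω, p k ω)) = torusUniform.prod torusUniform := by
      rw [(indepFun_iff_map_prod_eq_prod_map_map (hmeas j).aemeasurable
        (hmeas k).aemeasurable).mp hjkI, hlaw, hlaw]
    have hmap : μ.map (fun ω => (p z ω, (p j ω, p k ω)))
        = torusUniform.prod (torusUniform.prod torusUniform) := by
      rw [(indepFun_iff_map_prod_eq_prod_map_map (hmeas z).aemeasurable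
        ((hmeas j).prodMk (hmeas k)).aemeasurable).mp hpair.symm, hlaw, hmapjk]
    set S : Set (Torus × Torus × Torus) := {q | dist q.1 q.2.1 ≤ r ∧ dist q.1 q.2.2 ≤ r}
      with hSdef
    have hS : MeasurableSet S := by
      apply MeasurableSet.inter
      · exact measurableSet_le (measurable_fst.dist (measurable_fst.comp measurable_snd))
          measurable_const
      · exact measurableSet_le (measurable_fst.dist (measurable_snd.comp measurable_snd))
          measurable_const
    have hev : {ω | dist (p z ω) (p j ω) ≤ r ∧ dist (p z ω) (p k ω) ≤ r}
        = (fun ω => (p z ω, (p j ω, p k ω))) ⁻¹' S := rfl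
    rw [hev, ← Measure.map_apply ((hmeas z).prodMk ((hmeas j).prodMk (hmeas k))) hS, hmap,
      Measure.prod_apply hS]
    have hfib : ∀ x : Torus,
        (Prod.mk x ⁻¹' S) = Metric.closedBall x r ×ˢ Metric.closedBall x r := by
      intro x
      ext y
      simp only [hSdef, Set.mem_preimage, Set.mem_setOf_eq, Set.mem_prod,
        Metric.mem_closedBall]
      rw [dist_comm (y.1) x, dist_comm (y.2) x]
    calc ∫⁻ x, (torusUniform.prod torusUniform) (Prod.mk x ⁻¹' S) ∂torusUniform
        ≤ ∫⁻ _x, (c * c) * (c * c) ∂torusUniform := by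
          apply lintegral_mono
          intro x
          dsimp only
          rw [hfib x, Measure.prod_prod]
          exact mul_le_mul' (torus_ball_bound x r) (torus_ball_bound x r)
      _ = (c * c) * (c * c) := by rw [lintegral_const, measure_univ, mul_one]
  -- the union bound over pairs
  set ι' := {j : Fin m // j ≠ z} with hι'def
  set P : Finset (ι' × ι') := Finset.univ.filter fun q => q.1 < q.2 with hPdef
  set A : ι' × ι' → Set Ω := fun q =>
    {ω | dist (p z ω) (p q.1.1 ω) ≤ r ∧ dist (p z ω) (p q.2.1 ω) ≤ r} with hAdef
  have hE : {ω | secondNearestDist (p z ω) (fun j : ι' => p j.1 ω) ∈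
      Set.Icc (Real.sqrt (1 / ((i + 1) * (m - 1) * Real.pi))) r} ⊆ ⋃ q ∈ P, A q := by
    intro ω hω
    have h2 : secondNearestDist (p z ω) (fun j : ι' => p j.1 ω) ≤ r := hω.2
    set x₀ := p z ω
    set Sset : Set ℝ := {t | ∃ j k : ι', j ≠ k ∧
      t = max (dist x₀ (p j.1 ω)) (dist x₀ (p k.1 ω))} with hSsetdef
    have hfin : Sset.Finite := by
      apply (Set.finite_range (fun q : ι' × ι' =>
        max (dist x₀ (p q.1.1 ω)) (dist x₀ (p q.2.1 ω)))).subset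
      rintro t ⟨j, k, -, rfl⟩
      exact ⟨(j, k), rfl⟩
    have hj0 : ((⟨⟨1, by omega⟩, by simp [hzdef, Fin.ext_iff]⟩ : ι') : ι') ≠
        ⟨⟨2, by omega⟩, by simp [hzdef, Fin.ext_iff]⟩ := by
      simp [Subtype.ext_iff, Fin.ext_iff]
    have hne : Sset.Nonempty := ⟨_, _, _, hj0, rfl⟩
    have hmem : sInf Sset ∈ Sset := hne.csInf_mem hfin
    obtain ⟨j, k, hjk, ht⟩ := hmem
    have hle : max (dist x₀ (p j.1 ω)) (dist x₀ (p k.1 ω)) ≤ r := by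
      rw [← ht]; exact h2
    rcases lt_or_gt_of_ne hjk with h | h
    · exact Set.mem_biUnion (show (j, k) ∈ P by simp [hPdef, h])
        ⟨le_of_max_le_left hle, le_of_max_le_right hle⟩
    · exact Set.mem_biUnion (show (k, j) ∈ P by simp [hPdef, h])
        ⟨le_of_max_le_right hle, le_of_max_le_left hle⟩
  have hcardι' : Fintype.card ι' = m - 1 := by
    simp [hι'def, Fintype.card_subtype_compl]
  have h2card : 2 * P.card ≤ (m - 1) * (m - 1) := by
    have himg : P.image Prod.swap = Finset.univ.filter (fun q : ι' × ι' => q.2 < q.1) := by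
      ext q
      simp only [Finset.mem_image, hPdef, Finset.mem_filter, Finset.mem_univ, true_and]
      constructor
      · rintro ⟨a, ha, rfl⟩; exact ha
      · intro h; exact ⟨q.swap, h, by simp⟩
    have hdisj : Disjoint P (Finset.univ.filter (fun q : ι' × ι' => q.2 < q.1)) := by
      rw [Finset.disjoint_left]
      intro q hq hq'
      simp only [hPdef, Finset.mem_filter, Finset.mem_univ, true_and] at hq hq'
      exact absurd hq' (lt_asymm hq)
    calc 2 * P.card = P.card + (P.image Prod.swap).card := by
          rw [Finset.card_image_of_injective _ Prod.swap_injective]; ring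
      _ = (P ∪ Finset.univ.filter (fun q : ι' × ι' => q.2 < q.1)).card := by
          rw [himg, Finset.card_union_of_disjoint hdisj]
      _ ≤ (Finset.univ : Finset (ι' × ι')).card := Finset.card_le_card (Finset.subset_univ _)
      _ = (m - 1) * (m - 1) := by rw [Finset.card_univ, Fintype.card_prod, hcardι']
  -- putting it together
  calc μ {ω | secondNearestDist (p z ω) (fun j : ι' => p j.1 ω) ∈
        Set.Icc (Real.sqrt (1 / ((i + 1) * (m - 1) * Real.pi))) r}
      ≤ μ (⋃ q ∈ P, A q) := measure_mono hE
    _ ≤ ∑ q ∈ P, μ (A q) := measure_biUnion_finset_le P A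
    _ ≤ ∑ _q ∈ P, (c * c) * (c * c) := by
        apply Finset.sum_le_sum
        intro q hq
        simp only [hPdef, Finset.mem_filter] at hq
        have hne' : q.1.1 ≠ q.2.1 := fun h => (ne_of_lt hq.2) (Subtype.ext h)
        exact key q.1.1 q.2.1 q.1.2 q.2.2 hne'
    _ = P.card • ((c * c) * (c * c)) := Finset.sum_const _
    _ ≤ ENNReal.ofReal (1 / i ^ 2) := by
        rw [nsmul_eq_mul]
        have hc4 : c * c * (c * c)
            = ENNReal.ofReal (2 * r * (2 * r) * (2 * r * (2 * r))) := by
          rw [hcdef, ← ENNReal.ofReal_mul (by positivity), ← ENNReal.ofReal_mul (by positivity)]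
        rw [hc4, ← ENNReal.ofReal_natCast P.card, ← ENNReal.ofReal_mul (Nat.cast_nonneg _)]
        apply ENNReal.ofReal_le_ofReal
        have hpi : (3 : ℝ) ≤ Real.pi := Real.pi_gt_three.le
        have hM : (2 : ℝ) ≤ (m : ℝ) - 1 := by
          have : (3 : ℝ) ≤ (m : ℝ) := by exact_mod_cast hm
          linarith
        have hI : (4 : ℝ) ≤ (i : ℝ) := by exact_mod_cast hi
        have hu0 : (0 : ℝ) ≤ 1 / (i * ((m : ℝ) - 1) * Real.pi) := by positivity
        have hr2 : r ^ 2 = 1 / (i * ((m : ℝ) - 1) * Real.pi) := Real.sq_sqrt hu0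
        have hNle : (P.card : ℝ) ≤ ((m : ℝ) - 1) ^ 2 / 2 := by
          have h2c : (2 * P.card : ℝ) ≤ ((m - 1 : ℕ) : ℝ) * ((m - 1 : ℕ) : ℝ) := by
            exact_mod_cast h2card
          have hc : ((m - 1 : ℕ) : ℝ) = (m : ℝ) - 1 := by
            rw [Nat.cast_sub (by omega)]; norm_num
          rw [hc] at h2c
          nlinarith
        have hrw : (P.card : ℝ) * (2 * r * (2 * r) * (2 * r * (2 * r)))
            = (P.card : ℝ) * (16 * (r ^ 2) ^ 2) := by ring
        rw [hrw, hr2]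
        have hIMpi : (0 : ℝ) < (i : ℝ) * ((m : ℝ) - 1) * Real.pi := by positivity
        calc (P.card : ℝ) * (16 * (1 / (i * ((m : ℝ) - 1) * Real.pi)) ^ 2)
            ≤ (((m : ℝ) - 1) ^ 2 / 2) * (16 * (1 / (i * ((m : ℝ) - 1) * Real.pi)) ^ 2) := by
              apply mul_le_mul_of_nonneg_right hNle (by positivity)
          _ = 8 / ((i : ℝ) ^ 2 * Real.pi ^ 2) := by
              field_simp
              ring
          _ ≤ 1 / (i : ℝ) ^ 2 := by
              rw [div_le_div_iff₀ (by positivity) (by positivity)]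
              have hpi2 : (9 : ℝ) ≤ Real.pi ^ 2 := by nlinarith
              nlinarith [hpi2, sq_nonneg ((i : ℝ))]
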